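/- Suppose 0 ≤ i ≤ n−1, SUF[i] ≠ 0, and there exists j < i with BWT[j] = BWT[i]; let p = prev(i) be the largest such j. Then LCP[LF[i]] = 1 + min{ LCP[l] : p+1 ≤ l ≤ i }. -/

import Mathlib

/-- Length of the longest common prefix of two lists. -/
def lcpLen {α : Type*} [DecidableEq α] : List α → List α → ℕ
  | a :: u, b :: v => if a = b then lcpLen u v + 1 else 0
  | _, _ => 0

/-- The suffix of `S` starting at position `i` (as a list). -/
def sfx {α : Type*} {n : ℕ} (S : Fin n → α) (i : ℕ) : List α :=
  (List.ofFn S).drop i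
/-- Burrows–Wheeler transform: `BWT[i] = S[SUF[i]-1]` if `SUF[i] ≠ 0`,
    and the sentinel `S[n-1]` otherwise. -/
def bwtOf {α : Type*} {n : ℕ} (hn : 0 < n) (S : Fin n → α)
    (SUF : Equiv.Perm (Fin n)) (i : Fin n) : α :=
  if (SUF i : ℕ) = 0 then S ⟨n - 1, by omega⟩
  else S ⟨(SUF i : ℕ) - 1, lt_of_le_of_lt (Nat.sub_le _ _) (Fin.isLt _)⟩

/-- LF-mapping: `LF[i] = ISA[SUF[i]-1]` if `SUF[i] ≠ 0`, and `0` otherwise. -/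
def lfOf {n : ℕ} (hn : 0 < n) (SUF : Equiv.Perm (Fin n)) (i : Fin n) : Fin n :=
  if (SUF i : ℕ) = 0 then ⟨0, hn⟩
  else SUF.symm ⟨(SUF i : ℕ) - 1, lt_of_le_of_lt (Nat.sub_le _ _) (Fin.isLt _)⟩

section Aux
variable {α : Type*} [LinearOrder α]

lemma lcpLen_nil_left (w : List α) : lcpLen ([] : List α) w = 0 := by cases w <;> rfl

lemma lcpLen_cons (a : α) (u v : List α) :
    lcpLen (a :: u) (a :: v) = lcpLen u v + 1 := by simp [lcpLen]

lemma lcpLen_min : ∀ (u v w : List α), List.Lex (· < ·) u v → List.Lex (· < ·) v w →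
    lcpLen u w = min (lcpLen u v) (lcpLen v w)
  | [], v, w, _, _ => by simp [lcpLen_nil_left]
  | a :: u, v, w, huv, hvw => by
    cases v with
    | nil => exact absurd huv List.not_lex_nil
    | cons b v =>
      cases w with
      | nil => exact absurd hvw List.not_lex_nil
      | cons c w =>
        cases huv with
        | cons h1 =>
          cases hvw with
          | cons h2 =>
            rw [lcpLen_cons, lcpLen_cons, lcpLen_cons, lcpLen_min u v w h1 h2]
            omega
          | rel h2 =>
            have hac : a ≠ c := ne_of_lt h2
            simp [lcpLen, hac]
        | rel h1 =>
          cases hvw with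
          | cons h2 =>
            simp [lcpLen, ne_of_lt h1]
          | rel h2 =>
            have hac : a ≠ c := ne_of_lt (lt_trans h1 h2)
            simp [lcpLen, hac, ne_of_lt h1]

lemma sfx_cons {n : ℕ} (S : Fin n → α) (k : ℕ) (hk : k < n) :
    sfx S k = S ⟨k, hk⟩ :: sfx S (k + 1) := by
  unfold sfx
  rw [List.drop_eq_getElem_cons (by simpa using hk)]
  simp

lemma lex_asymm {u v : List α} (h : List.Lex (· < ·) u v) : ¬ List.Lex (· < ·) v u :=
  List.lex_asymm (fun h h' => lt_asymm h h') h

lemma lex_conv {n : ℕ} (g : Fin n → List α)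
    (hg : ∀ a b : Fin n, a < b → List.Lex (· < ·) (g a) (g b))
    {x y : Fin n} (h : List.Lex (· < ·) (g x) (g y)) : x < y := by
  rcases lt_trichotomy x y with h' | h' | h'
  · exact h'
  · subst h'; exact absurd h (lex_asymm h)
  · exact absurd (hg y x h') (lex_asymm h)

lemma lex_head {a b : α} {u v : List α} (h : List.Lex (· < ·) (a :: u) (b :: v)) :
    a < b ∨ a = b := by
  cases h with
  | cons h => exact Or.inr rfl
  | rel h => exact Or.inl h

lemma lex_tail {a : α} {u v : List α} (h : List.Lex (· < ·) (a :: u) (a :: v)) :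
    List.Lex (· < ·) u v :=
  List.lex_cons_iff.mp h

lemma inf'_congr_set {s t : Finset ℕ} (hs : s.Nonempty) (ht : t.Nonempty)
    (h : s = t) (f : ℕ → ℕ) : s.inf' hs f = t.inf' ht f := by subst h; rfl

lemma lcp_chain {n : ℕ} (g : Fin n → List α)
    (hg : ∀ a b : Fin n, a < b → List.Lex (· < ·) (g a) (g b))
    (LCP : ℕ → ℕ)
    (hLCP : ∀ l, 1 ≤ l → ∀ h2 : l < n, LCP l = lcpLen (g ⟨l - 1, by omega⟩) (g ⟨l, h2⟩)) :
    ∀ (i : ℕ) (hi : i < n) (p : ℕ) (hp : p < i),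
      lcpLen (g ⟨p, by omega⟩) (g ⟨i, hi⟩) =
        (Finset.Icc (p + 1) i).inf' (Finset.nonempty_Icc.mpr (by omega)) LCP := by
  intro i
  induction i with
  | zero => intro hi p hp; omega
  | succ m ih =>
    intro hi p hp
    rcases Nat.lt_or_ge p m with h | h
    · have hmn : m < n := by omega
      have step : LCP (m + 1) = lcpLen (g ⟨m, hmn⟩) (g ⟨m + 1, hi⟩) := by
        simpa using hLCP (m + 1) (by omega) hi
      have hmin := lcpLen_min (g ⟨p, by omega⟩) (g ⟨m, hmn⟩) (g ⟨m + 1, hi⟩)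
        (hg _ _ (by exact Fin.mk_lt_mk.mpr h)) (hg _ _ (by exact Fin.mk_lt_mk.mpr (by omega)))
      rw [hmin, ih hmn p h, ← step,
        inf'_congr_set _ (Finset.insert_nonempty _ _)
          (Finset.insert_Icc_right_eq_Icc_add_one (by omega : p + 1 ≤ m + 1)).symm LCP,
        Finset.inf'_insert]
      exact min_comm _ _
    · have hpm : p = m := by omega
      subst hpm
      have : Finset.Icc (p + 1) (p + 1) = {p + 1} := Finset.Icc_self _
      rw [inf'_congr_set _ (Finset.singleton_nonempty _) this LCP,
        Finset.inf'_singleton, hLCP (p + 1) (by omega) hi]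
      simp

end Aux

/-- If `SUF[i] ≠ 0` and `p = prev(i)` is the largest index `< i` with
`BWT[p] = BWT[i]`, then `LCP[LF[i]] = 1 + min { LCP[l] : p+1 ≤ l ≤ i }`. -/
theorem lcp_lf_eq_one_add_rmq {α : Type*} [LinearOrder α] {n : ℕ} (hn : 0 < n)
    (S : Fin n → α)
    (hsent : ∀ k : Fin n, (k : ℕ) < n - 1 → S ⟨n - 1, by omega⟩ < S k)
    (SUF : Equiv.Perm (Fin n))
    (hSUF : ∀ i j : Fin n, i < j →
      List.Lex (· < ·) (sfx S ((SUF i : Fin n) : ℕ)) (sfx S ((SUF j : Fin n) : ℕ)))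
    (LCP : ℕ → ℕ)
    (hLCP : ∀ l, ∀ _ : 1 ≤ l, ∀ h2 : l < n,
      LCP l = lcpLen (sfx S ((SUF ⟨l - 1, by omega⟩ : Fin n) : ℕ))
                     (sfx S ((SUF ⟨l, h2⟩ : Fin n) : ℕ)))
    (i : Fin n) (hi0 : (SUF i : ℕ) ≠ 0)
    (p : Fin n) (hpi : p < i) (hpb : bwtOf hn S SUF p = bwtOf hn S SUF i)
    (hpmax : ∀ j : Fin n, j < i → bwtOf hn S SUF j = bwtOf hn S SUF i → j ≤ p) :
    LCP ((lfOf hn SUF i : Fin n) : ℕ) =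
      1 + (Finset.Icc ((p : ℕ) + 1) (i : ℕ)).inf'
            (Finset.nonempty_Icc.mpr (by omega)) LCP := by
  classical
  have hconv : ∀ x y : Fin n,
      List.Lex (· < ·) (sfx S ((SUF x : Fin n) : ℕ)) (sfx S ((SUF y : Fin n) : ℕ)) → x < y := by
    intro x y h
    rcases lt_trichotomy x y with h' | h' | h'
    · exact h'
    · subst h'; exact absurd h (lex_asymm h)
    · exact absurd (hSUF y x h') (lex_asymm h)
  have han : (SUF i : ℕ) < n := (SUF i).isLt
  have hin : (i : ℕ) < n := i.isLt
  have hn2 : 2 ≤ n := by have := hpi; omega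
  have ha1 : (SUF i : ℕ) - 1 < n - 1 := by omega
  have hBi : bwtOf hn S SUF i = S ⟨(SUF i : ℕ) - 1, by omega⟩ := by
    rw [bwtOf, if_neg hi0]
  -- SUF p ≠ 0
  have hb0 : (SUF p : ℕ) ≠ 0 := by
    intro h
    have hBp : bwtOf hn S SUF p = S ⟨n - 1, by omega⟩ := by rw [bwtOf, if_pos h]
    have hlt := hsent ⟨(SUF i : ℕ) - 1, by omega⟩ ha1
    rw [hpb, hBi] at hBp
    exact absurd hBp (ne_of_gt hlt)
  have hbn : (SUF p : ℕ) < n := (SUF p).isLt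
  have hceq : S ⟨(SUF p : ℕ) - 1, by omega⟩ = S ⟨(SUF i : ℕ) - 1, by omega⟩ := by
    have hBp : bwtOf hn S SUF p = S ⟨(SUF p : ℕ) - 1, by omega⟩ := by
      rw [bwtOf, if_neg hb0]
    rw [← hBp, ← hBi, hpb]
  have hsa : sfx S ((SUF i : ℕ) - 1) =
      S ⟨(SUF i : ℕ) - 1, by omega⟩ :: sfx S (SUF i : ℕ) := by
    have := sfx_cons S ((SUF i : ℕ) - 1) (by omega)
    rwa [Nat.sub_add_cancel (by omega)] at this
  have hsb : sfx S ((SUF p : ℕ) - 1) =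
      S ⟨(SUF p : ℕ) - 1, by omega⟩ :: sfx S (SUF p : ℕ) := by
    have := sfx_cons S ((SUF p : ℕ) - 1) (by omega)
    rwa [Nat.sub_add_cancel (by omega)] at this
  have hLFi : lfOf hn SUF i = SUF.symm ⟨(SUF i : ℕ) - 1, by omega⟩ := by
    rw [lfOf, if_neg hi0]
  have hLFp : lfOf hn SUF p = SUF.symm ⟨(SUF p : ℕ) - 1, by omega⟩ := by
    rw [lfOf, if_neg hb0]
  obtain ⟨u, hu⟩ : ∃ u : Fin n, SUF.symm ⟨(SUF p : ℕ) - 1, by omega⟩ = u := ⟨_, rfl⟩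
  obtain ⟨v, hv⟩ : ∃ v : Fin n, SUF.symm ⟨(SUF i : ℕ) - 1, by omega⟩ = v := ⟨_, rfl⟩
  have hSu : ((SUF u : Fin n) : ℕ) = (SUF p : ℕ) - 1 := by
    rw [← hu]; simp only [Equiv.apply_symm_apply]
  have hSv : ((SUF v : Fin n) : ℕ) = (SUF i : ℕ) - 1 := by
    rw [← hv]; simp only [Equiv.apply_symm_apply]
  have hLFiv : lfOf hn SUF i = v := by rw [hLFi, hv]
  -- LF p < LF i
  have key1 : u < v := by
    apply hconv
    rw [hSu, hSv]
    rw [hsa, hsb, hceq]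
    exact List.Lex.cons (hSUF p i hpi)
  -- no index strictly between LF p and LF i
  have key2 : ∀ q : Fin n, u < q → q < v → False := by
    intro q h1 h2
    have l1 : List.Lex (· < ·) (sfx S ((SUF p : ℕ) - 1)) (sfx S ((SUF q : Fin n) : ℕ)) := by
      have := hSUF u q h1
      rwa [hSu] at this
    have l2 : List.Lex (· < ·) (sfx S ((SUF q : Fin n) : ℕ)) (sfx S ((SUF i : ℕ) - 1)) := by
      have := hSUF q v h2
      rwa [hSv] at this
    have hyn : (SUF q : ℕ) < n := (SUF q).isLt
    have hsy : sfx S (SUF q : ℕ) = S ⟨(SUF q : ℕ), hyn⟩ :: sfx S ((SUF q : ℕ) + 1) :=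
      sfx_cons S _ hyn
    rw [hsb, hceq, hsy] at l1
    rw [hsa, hsy] at l2
    -- head of suffix q equals the common character
    have hcy : S ⟨(SUF q : ℕ), hyn⟩ = S ⟨(SUF i : ℕ) - 1, by omega⟩ := by
      have hh1 := lex_head l1
      have hh2 := lex_head l2
      rcases hh1 with h | h
      · rcases hh2 with h' | h'
        · exact absurd h' (not_lt.mpr (le_of_lt h))
        · exact h'
      · exact h.symm
    -- SUF q ≠ n - 1 (else head would be the sentinel)
    have hy1 : (SUF q : ℕ) + 1 < n := by
      rcases Nat.lt_or_ge ((SUF q : ℕ)) (n - 1) with h | h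
      · omega
      · exfalso
        have hyeq : (SUF q : ℕ) = n - 1 := by omega
        have hlt := hsent ⟨(SUF i : ℕ) - 1, by omega⟩ ha1
        have heads : S ⟨(SUF q : ℕ), hyn⟩ = S ⟨n - 1, by omega⟩ := by
          congr 1
          exact Fin.ext hyeq
        exact absurd (heads.symm.trans hcy) (ne_of_lt hlt)
    -- tails
    have t1 : List.Lex (· < ·) (sfx S (SUF p : ℕ)) (sfx S ((SUF q : ℕ) + 1)) := by
      rw [hcy] at l1; exact lex_tail l1
    have t2 : List.Lex (· < ·) (sfx S ((SUF q : ℕ) + 1)) (sfx S (SUF i : ℕ)) := by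
      rw [hcy] at l2; exact lex_tail l2
    obtain ⟨j, hjdef⟩ : ∃ j : Fin n, SUF.symm ⟨(SUF q : ℕ) + 1, hy1⟩ = j := ⟨_, rfl⟩
    have hSj : ((SUF j : Fin n) : ℕ) = (SUF q : ℕ) + 1 := by
      rw [← hjdef]
      simp only [Equiv.apply_symm_apply]
    have hpj : p < j := by
      apply hconv
      rw [hSj]; exact t1
    have hji : j < i := by
      apply hconv
      rw [hSj]; exact t2
    have hBj : bwtOf hn S SUF j = bwtOf hn S SUF i := by
      rw [bwtOf, if_neg (by rw [hSj]; omega), hBi]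
      have hd : ((SUF j : Fin n) : ℕ) - 1 = (SUF q : ℕ) := by omega
      have e : (⟨((SUF j : Fin n) : ℕ) - 1,
          lt_of_le_of_lt (Nat.sub_le _ _) (Fin.isLt _)⟩ : Fin n) = ⟨(SUF q : ℕ), hyn⟩ :=
        Fin.ext hd
      rw [e]
      exact hcy
    exact absurd (hpmax j hji hBj) (not_le.mpr hpj)
  -- LF i = LF p + 1
  have hLP : (u : ℕ) + 1 = (v : ℕ) := by
    have h1 : (u : ℕ) < (v : ℕ) := key1
    by_contra hne
    have hqn : (u : ℕ) + 1 < n := by have := v.isLt; omega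
    exact key2 ⟨(u : ℕ) + 1, hqn⟩ (Fin.mk_lt_mk.mpr (by omega)) (Fin.mk_lt_mk.mpr (by omega))
  have hLn : ((lfOf hn SUF i : Fin n) : ℕ) < n := (lfOf hn SUF i).isLt
  have hval : ((lfOf hn SUF i : Fin n) : ℕ) = (v : ℕ) := congrArg Fin.val hLFiv
  have hL1 : 1 ≤ ((lfOf hn SUF i : Fin n) : ℕ) := by omega
  rw [hLCP _ hL1 hLn]
  have e1 : (⟨((lfOf hn SUF i : Fin n) : ℕ) - 1, by omega⟩ : Fin n) = u := by
    apply Fin.ext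
    show ((lfOf hn SUF i : Fin n) : ℕ) - 1 = (u : ℕ)
    omega
  have e2 : (⟨((lfOf hn SUF i : Fin n) : ℕ), hLn⟩ : Fin n) = v := by
    apply Fin.ext
    show ((lfOf hn SUF i : Fin n) : ℕ) = (v : ℕ)
    omega
  rw [e1, e2, hSu, hSv]
  rw [hsb, hsa, hceq, lcpLen_cons]
  have hchain := lcp_chain (fun j : Fin n => sfx S ((SUF j : Fin n) : ℕ))
    (fun a b h => hSUF a b h) LCP (fun l h1 h2 => hLCP l h1 h2) (i : ℕ) hin (p : ℕ) hpi
  simp only [Fin.eta] at hchain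
  rw [hchain]
  omega
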